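/- Let R be a crowded topological ring (every neighborhood of zero contains an invertible element) and 𝓑 a bornology on R. For any topological R-module X (scalar multiplication jointly continuous), the identity map X^{♯𝓑} → X is a homeomorphism; equivalently, for every neighborhood U of zero in X and every bounded set B ⊆ R, the set U/B = {x ∈ U : B*x ⋐ U} is a neighborhood of zero in X. -/

import Mathlib

/-- For `U ⊆ X` and `B ⊆ R`, the set `U/B = {x ∈ U : B*x ⋐ U}`, where `A ⋐ U` means
`A + V ⊆ U` for some neighborhood `V` of zero. -/
def modDiv {R X : Type*} [SMul R X] [Add X] [Zero X] [TopologicalSpace X]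
    (U : Set X) (B : Set R) : Set X :=
  {x ∈ U | ∃ V ∈ nhds (0 : X), ∀ b ∈ B, ∀ v ∈ V, b • x + v ∈ U}

theorem modDiv_mem_nhds_of_crowded {R X : Type*}
    [Ring R] [TopologicalSpace R] [IsTopologicalRing R]
    [AddCommGroup X] [TopologicalSpace X] [IsTopologicalAddGroup X] [T2Space X] [Module R X]
    (hcrowded : ∀ U ∈ nhds (0 : R), ∃ x ∈ U, IsUnit x)
    (hcont : Continuous fun p : R × X => p.1 • p.2) :
    ∀ U ∈ nhds (0 : X), ∀ B : Set R,
      (∀ W ∈ nhds (0 : R), ∃ V ∈ nhds (0 : R), ∀ b ∈ B, ∀ v ∈ V, b * v ∈ W) →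
      modDiv U B ∈ nhds (0 : X) := by
  intro U hU B hB
  -- U₂ + U₂ ⊆ U
  obtain ⟨U₂, hU₂, hU₂add⟩ := exists_nhds_zero_half hU
  have h0U₂ : (0 : X) ∈ U₂ := mem_of_mem_nhds hU₂
  -- continuity of smul at (0,0)
  have hsm : Filter.Tendsto (fun p : R × X => p.1 • p.2) (nhds (0, 0)) (nhds (0 : X)) := by
    simpa using hcont.tendsto ((0 : R), (0 : X))
  have hpre : (fun p : R × X => p.1 • p.2) ⁻¹' U₂ ∈ nhds ((0 : R), (0 : X)) := hsm hU₂
  rw [mem_nhds_prod_iff] at hpre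
  obtain ⟨W, hW, U₁, hU₁, hWU₁⟩ := hpre
  have hWU₁' : ∀ w ∈ W, ∀ y ∈ U₁, w • y ∈ U₂ := by
    intro w hw y hy
    exact hWU₁ (Set.mk_mem_prod hw hy)
  obtain ⟨V, hV, hBV⟩ := hB W hW
  obtain ⟨u, hu, huu⟩ := hcrowded (V ∩ W) (Filter.inter_mem hV hW)
  obtain ⟨e, he⟩ := huu
  -- candidate neighborhood
  have hcont' : Continuous fun x : X => (↑e⁻¹ : R) • x :=
    hcont.comp (continuous_const.prodMk continuous_id)
  have htend : Filter.Tendsto (fun x : X => (↑e⁻¹ : R) • x) (nhds 0) (nhds 0) := by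
    simpa using hcont'.tendsto (0 : X)
  have hN : (fun x : X => (↑e⁻¹ : R) • x) ⁻¹' U₁ ∈ nhds (0 : X) := htend hU₁
  refine Filter.mem_of_superset hN ?_
  intro x hx
  simp only [Set.mem_preimage] at hx
  have hxeq : (↑e : R) • ((↑e⁻¹ : R) • x) = x := by
    rw [smul_smul, Units.mul_inv, one_smul]
  have huW : u ∈ W := hu.2
  have huV : u ∈ V := hu.1
  have hxU₂ : x ∈ U₂ := by
    rw [← hxeq, he]
    exact hWU₁' u huW _ hx
  refine ⟨by simpa using hU₂add x hxU₂ 0 h0U₂, U₂, hU₂, ?_⟩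
  intro b hb v hv
  have hbx : b • x ∈ U₂ := by
    rw [← hxeq, he, smul_smul]
    exact hWU₁' (b * u) (hBV b hb u huV) _ hx
  exact hU₂add _ hbx v hv
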